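/- Let $\mathbf{z}\in\mathbb{R}^C$ be sorted descendingly, $0 < T < 1$, $\Delta z = z_1 - z_2$, and $d(\mathbf{z};T,i) = \frac{e^{z_i}}{\sum_j e^{z_j}} - \frac{e^{z_i/T}}{\sum_j e^{z_j/T}}$. If $d(\mathbf{z};T,1) < 0$ and $d(\mathbf{z};T,i) \geq 0$ for all $i \geq 2$, then for all $M, L \in \{1,\dots,C\}$: $|g(\mathbf{z};T,M) - g(\mathbf{z};T,L)| < \frac{(C-1)e^{-\Delta z}}{(C-1)e^{-\Delta z}+1}$, where $g(\mathbf{z};T,M) = \sum_{i=1}^M d(\mathbf{z};T,i)$. -/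
import Mathlib


noncomputable def dfun {C : ℕ} (z : Fin C → ℝ) (T : ℝ) (i : Fin C) : ℝ :=
  Real.exp (z i) / (∑ j, Real.exp (z j)) - Real.exp (z i / T) / (∑ j, Real.exp (z j / T))

noncomputable def gsum {C : ℕ} (z : Fin C → ℝ) (T : ℝ) (M : ℕ) : ℝ :=
  ∑ i ∈ Finset.univ.filter (fun i : Fin C => (i : ℕ) < M), dfun z T i

theorem stmt_16 {C : ℕ} (hC : 2 ≤ C) (z : Fin C → ℝ)
    (hz : ∀ i j : Fin C, i ≤ j → z j ≤ z i)
    (T : ℝ) (hT0 : 0 < T) (hT1 : T < 1)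
    (h1 : dfun z T ⟨0, by omega⟩ < 0)
    (h2 : ∀ i : Fin C, 1 ≤ (i : ℕ) → 0 ≤ dfun z T i) :
    ∀ M L : ℕ, 1 ≤ M → M ≤ C → 1 ≤ L → L ≤ C →
      |gsum z T M - gsum z T L| <
        ((C : ℝ) - 1) * Real.exp (-(z ⟨0, by omega⟩ - z ⟨1, by omega⟩)) /
          (((C : ℝ) - 1) * Real.exp (-(z ⟨0, by omega⟩ - z ⟨1, by omega⟩)) + 1) := by
  intro M L hM1 hMC hL1 hLC
  have h0C : 0 < C := by omega
  have h1C : 1 < C := by omega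
  set i0 : Fin C := ⟨0, by omega⟩ with hi0
  set i1 : Fin C := ⟨1, by omega⟩ with hi1
  have hne : i0 ≠ i1 := by
    intro h
    have := congrArg Fin.val h
    simp [hi0, hi1] at this
  have hSpos : 0 < ∑ j, Real.exp (z j) :=
    Finset.sum_pos (fun j _ => Real.exp_pos _) ⟨i0, Finset.mem_univ _⟩
  have hSTpos : 0 < ∑ j, Real.exp (z j / T) :=
    Finset.sum_pos (fun j _ => Real.exp_pos _) ⟨i0, Finset.mem_univ _⟩
  -- total sum is zero
  have htot : ∑ i, dfun z T i = 0 := by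
    unfold dfun
    rw [Finset.sum_sub_distrib, ← Finset.sum_div, ← Finset.sum_div,
      div_self hSpos.ne', div_self hSTpos.ne', sub_self]
  -- lower bound for gsum
  have hlow : ∀ N : ℕ, 1 ≤ N → dfun z T i0 ≤ gsum z T N := by
    intro N hN
    have hsub : {i0} ⊆ Finset.univ.filter (fun i : Fin C => (i : ℕ) < N) := by
      intro x hx
      simp only [Finset.mem_singleton] at hx
      subst hx
      simp [hi0]
      omega
    calc dfun z T i0 = ∑ i ∈ {i0}, dfun z T i := by rw [Finset.sum_singleton]
      _ ≤ _ := Finset.sum_le_sum_of_subset_of_nonneg hsub (by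
          intro i hi hni
          simp only [Finset.mem_singleton] at hni
          apply h2
          have : (i0 : ℕ) = 0 := rfl
          have hv : (i : ℕ) ≠ 0 := by
            intro h
            exact hni (Fin.ext (by simp [hi0, h]))
          omega)
  -- upper bound for gsum
  have hhigh : ∀ N : ℕ, 1 ≤ N → gsum z T N ≤ 0 := by
    intro N hN
    have : gsum z T N ≤ ∑ i, dfun z T i := by
      apply Finset.sum_le_sum_of_subset_of_nonneg (Finset.filter_subset _ _)
      intro i hi hni
      simp only [Finset.mem_filter, Finset.mem_univ, true_and, not_lt] at hni
      exact h2 i (by omega)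
    linarith [htot ▸ this]
  -- key strict bound: -d₀ < RHS
  set a : ℝ := Real.exp (z i0) with ha
  set b : ℝ := Real.exp (z i1) with hb
  have hapos : 0 < a := Real.exp_pos _
  have hbpos : 0 < b := Real.exp_pos _
  have hCpos : (1:ℝ) ≤ (C:ℝ) - 1 := by
    have : (2:ℝ) ≤ (C:ℝ) := by exact_mod_cast hC
    linarith
  -- softmax at temperature T on coordinate 0 is < 1
  have hclaim1 : Real.exp (z i0 / T) / (∑ j, Real.exp (z j / T)) < 1 := by
    rw [div_lt_one hSTpos]
    exact Finset.single_lt_sum (f := fun j => Real.exp (z j / T)) hne.symm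
      (Finset.mem_univ _) (Finset.mem_univ _)
      (Real.exp_pos _) (fun k _ _ => (Real.exp_pos _).le)
  -- sum bound: S ≤ a + (C-1) b
  have hclaim2 : (∑ j, Real.exp (z j)) ≤ a + ((C:ℝ) - 1) * b := by
    have herase : (∑ j, Real.exp (z j)) =
        a + ∑ j ∈ Finset.univ.erase i0, Real.exp (z j) := by
      rw [ha]
      exact (Finset.add_sum_erase _ (fun j => Real.exp (z j)) (Finset.mem_univ i0)).symm
    rw [herase]
    have hterm : ∀ j ∈ Finset.univ.erase i0, Real.exp (z j) ≤ b := by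
      intro j hj
      have hjne : j ≠ i0 := (Finset.mem_erase.mp hj).1
      have hjv : 1 ≤ (j : ℕ) := by
        by_contra h
        exact hjne (Fin.ext (by simp [hi0]; omega))
      have : z j ≤ z i1 := hz i1 j (by
        rw [Fin.le_def]; simpa [hi1] using hjv)
      exact Real.exp_le_exp.mpr this
    have hsum := Finset.sum_le_card_nsmul _ _ b hterm
    have hcard : (Finset.univ.erase i0).card = C - 1 := by
      rw [Finset.card_erase_of_mem (Finset.mem_univ _), Finset.card_univ, Fintype.card_fin]
    rw [hcard] at hsum
    have : ((C - 1 : ℕ) : ℝ) * b = ((C:ℝ) - 1) * b := by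
      congr 1
      push_cast [Nat.cast_sub (by omega : 1 ≤ C)]
      ring
    rw [nsmul_eq_mul] at hsum
    linarith [this ▸ hsum]
  have hE : Real.exp (-(z i0 - z i1)) = b / a := by
    rw [neg_sub, Real.exp_sub]
  have hden : 0 < ((C:ℝ) - 1) * Real.exp (-(z i0 - z i1)) + 1 := by
    have := Real.exp_pos (-(z i0 - z i1))
    nlinarith
  have hkey : -dfun z T i0 <
      ((C:ℝ) - 1) * Real.exp (-(z i0 - z i1)) /
        (((C:ℝ) - 1) * Real.exp (-(z i0 - z i1)) + 1) := by
    have hpS : a / (a + ((C:ℝ) - 1) * b) ≤ a / (∑ j, Real.exp (z j)) := by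
      apply div_le_div_of_nonneg_left hapos.le hSpos hclaim2
    have hd0 : -dfun z T i0 < 1 - a / (a + ((C:ℝ) - 1) * b) := by
      unfold dfun
      rw [← ha]
      linarith
    have heq : 1 - a / (a + ((C:ℝ) - 1) * b) =
        ((C:ℝ) - 1) * Real.exp (-(z i0 - z i1)) /
          (((C:ℝ) - 1) * Real.exp (-(z i0 - z i1)) + 1) := by
      rw [hE]
      have h1 : 0 < a + ((C:ℝ) - 1) * b := by nlinarith
      have h2 : ((C:ℝ) - 1) * (b / a) + 1 ≠ 0 := by
        have : 0 < ((C:ℝ) - 1) * (b / a) + 1 := by positivity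
        exact this.ne'
      field_simp
      ring
    linarith [heq ▸ hd0]
  -- combine
  have hM := hlow M hM1
  have hL := hlow L hL1
  have hM' := hhigh M hM1
  have hL' := hhigh L hL1
  rw [abs_sub_lt_iff]
  constructor <;> linarith
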